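/- Let g : (0,∞) → (0,∞) be three times continuously differentiable with g(t) = t·g(1/t) for all t > 0, and define b(s) = log g(e^s). Then b'(0) = 1/2, and for any twice continuously differentiable φ : ℝ → ℝ and x, u ∈ ℝ, the expansion φ(x+σu) − φ(x) + b(−φ'(x+σu)σu) − b(φ'(x)σu) has vanishing first- and second-order coefficients in σ: its first-order coefficient is (1 − 2b'(0))φ'(x)u = 0 and its second-order coefficient is (1 − 2b'(0))φ''(x)u²/2 = 0, so the expression is O(σ³) as σ → 0. -/

import Mathlib

open Real Asymptotics Filter

lemma aux_isBigO_pow_succ_of_deriv (f : ℝ → ℝ) (n : ℕ) (hf0 : f 0 = 0)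
    (hd : ∀ t, DifferentiableAt ℝ f t)
    (hO : deriv f =O[nhds (0:ℝ)] fun t => t ^ n) :
    f =O[nhds (0:ℝ)] fun t => t ^ (n + 1) := by
  rw [isBigO_iff] at hO
  obtain ⟨C, hC⟩ := hO
  obtain ⟨δ, hδ, hball⟩ := Metric.eventually_nhds_iff_ball.mp hC
  rw [isBigO_iff]
  refine ⟨max C 0, Metric.eventually_nhds_iff_ball.mpr ⟨δ, hδ, fun σ hσ => ?_⟩⟩
  have hsub : Metric.closedBall (0:ℝ) |σ| ⊆ Metric.ball (0:ℝ) δ := by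
    intro t ht
    simp only [Metric.mem_closedBall, Real.dist_eq, sub_zero] at ht
    simp only [Metric.mem_ball, Real.dist_eq, sub_zero]
    have : |σ| < δ := by simpa [Real.dist_eq] using hσ
    linarith
  have bound : ∀ t ∈ Metric.closedBall (0:ℝ) |σ|, ‖deriv f t‖ ≤ max C 0 * |σ| ^ n := by
    intro t ht
    have h1 := hball t (hsub ht)
    simp only [Metric.mem_closedBall, Real.dist_eq, sub_zero] at ht
    have h2 : |t| ^ n ≤ |σ| ^ n := pow_le_pow_left₀ (abs_nonneg t) ht n
    calc ‖deriv f t‖ ≤ C * ‖t ^ n‖ := h1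
      _ ≤ max C 0 * |t| ^ n := by
          rw [norm_pow, Real.norm_eq_abs]
          exact mul_le_mul_of_nonneg_right (le_max_left _ _) (by positivity)
      _ ≤ max C 0 * |σ| ^ n := by
          exact mul_le_mul_of_nonneg_left h2 (le_max_right _ _)
  have hmem : σ ∈ Metric.closedBall (0:ℝ) |σ| := by
    simp [Metric.mem_closedBall, Real.dist_eq]
  have key := (convex_closedBall (0:ℝ) |σ|).norm_image_sub_le_of_norm_deriv_le
    (fun t _ => hd t) bound (Metric.mem_closedBall_self (abs_nonneg σ)) hmem
  rw [hf0] at key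
  calc ‖f σ‖ = ‖f σ - 0‖ := by rw [sub_zero]
    _ ≤ max C 0 * |σ| ^ n * ‖σ - 0‖ := key
    _ = max C 0 * ‖σ ^ (n+1)‖ := by
        rw [sub_zero, norm_pow, Real.norm_eq_abs, pow_succ]; ring

lemma aux_sub_isBigO (f : ℝ → ℝ) (hf : ContDiff ℝ 1 f) :
    (fun t => f t - f 0) =O[nhds (0:ℝ)] fun t => t ^ 1 := by
  apply aux_isBigO_pow_succ_of_deriv _ 0 (by simp)
  · intro t
    exact ((hf.differentiable (by norm_num)) t).sub_const _
  · have hde : (deriv fun t => f t - f 0) = deriv f := by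
      funext t; exact deriv_sub_const _
    rw [hde]
    have h1 : deriv f =O[nhds (0:ℝ)] (fun _ => (1:ℝ)) :=
      (((hf.continuous_deriv le_rfl).continuousAt (x := 0)).isBigO_one ℝ)
    simpa using h1

lemma aux_taylor1 (f : ℝ → ℝ) (hf : ContDiff ℝ 2 f) :
    (fun t => f t - f 0 - t * deriv f 0) =O[nhds (0:ℝ)] fun t => t ^ 2 := by
  have hdf : ContDiff ℝ 1 (deriv f) := (contDiff_succ_iff_deriv.mp (show ContDiff ℝ ((1:ℕ∞)+1) f by exact_mod_cast hf)).2.2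
  apply aux_isBigO_pow_succ_of_deriv _ 1 (by simp)
  · intro t
    exact (((hf.differentiable (by norm_num)) t).sub_const _).sub
      ((differentiable_id.mul_const _) t)
  · have hde : (deriv fun t => f t - f 0 - t * deriv f 0) = fun t => deriv f t - deriv f 0 := by
      funext t
      rw [deriv_fun_sub, deriv_sub_const]
      · simp
      · exact ((hf.differentiable (by norm_num)) t).sub_const _
      · exact (differentiable_id.mul_const _) t
    rw [hde]
    simpa using aux_sub_isBigO (deriv f) hdf

section BLemmas
variable (g : ℝ → ℝ)

lemma aux_b_contDiff (hg_pos : ∀ t > (0:ℝ), 0 < g t)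
    (hg_smooth : ContDiffOn ℝ 3 g (Set.Ioi 0)) :
    ContDiff ℝ 3 (fun s => Real.log (g (Real.exp s))) := by
  rw [contDiff_iff_contDiffAt]
  intro s
  have hg_at : ContDiffAt ℝ 3 g (Real.exp s) :=
    hg_smooth.contDiffAt (isOpen_Ioi.mem_nhds (Real.exp_pos s))
  have hlog : ContDiffAt ℝ 3 Real.log (g (Real.exp s)) :=
    Real.contDiffAt_log.mpr (ne_of_gt (hg_pos _ (Real.exp_pos s)))
  exact hlog.comp s (hg_at.comp s (Real.contDiff_exp.contDiffAt))

lemma aux_b_bal (hg_pos : ∀ t > (0:ℝ), 0 < g t)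
    (hbal : ∀ t > (0:ℝ), g t = t * g (1 / t)) :
    ∀ s : ℝ, Real.log (g (Real.exp s)) = s + Real.log (g (Real.exp (-s))) := by
  intro s
  have h1 : g (Real.exp s) = Real.exp s * g (Real.exp (-s)) := by
    have := hbal (Real.exp s) (Real.exp_pos s)
    rwa [one_div, ← Real.exp_neg] at this
  rw [h1, Real.log_mul (Real.exp_ne_zero s) (ne_of_gt (hg_pos _ (Real.exp_pos _))),
    Real.log_exp]

lemma aux_b_deriv_zero (b : ℝ → ℝ) (hb : ContDiff ℝ 3 b)
    (hbal' : ∀ s, b s = s + b (-s)) : deriv b 0 = 1 / 2 := by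
  have hdb : DifferentiableAt ℝ b 0 := (hb.differentiable (by norm_num)) 0
  have h1 : HasDerivAt (fun s : ℝ => s + b (-s)) (1 + deriv b 0 * (-1)) 0 := by
    have hneg : HasDerivAt (fun s : ℝ => -s) (-1) 0 := hasDerivAt_neg 0
    have hb0 : HasDerivAt b (deriv b 0) (-(0:ℝ)) := by
      simpa using hdb.hasDerivAt
    exact (hasDerivAt_id 0).add (hb0.comp 0 hneg)
  have heq : b = fun s : ℝ => s + b (-s) := funext hbal'
  have h2 := h1.deriv
  rw [← heq] at h2
  linarith
end BLemmas
lemma aux_main (b : ℝ → ℝ) (hb : ContDiff ℝ 3 b) (hbal' : ∀ s, b s = s + b (-s))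
    (φ : ℝ → ℝ) (hφ : ContDiff ℝ 3 φ) (x u : ℝ) :
    (fun σ : ℝ => φ (x + σ * u) - φ x + b (-(deriv φ (x + σ * u)) * σ * u)
        - b (deriv φ x * σ * u)) =O[nhds (0:ℝ)] fun σ => σ ^ 3 := by
  -- basic smoothness
  have hφ1 : Differentiable ℝ φ := hφ.differentiable (by norm_num)
  have hφ' : ContDiff ℝ 2 (deriv φ) :=
    (contDiff_succ_iff_deriv.mp (show ContDiff ℝ ((2:ℕ∞)+1) φ by exact_mod_cast hφ)).2.2
  have hφ'' : ContDiff ℝ 1 (deriv (deriv φ)) :=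
    (contDiff_succ_iff_deriv.mp
      (show ContDiff ℝ ((1:ℕ∞)+1) (deriv φ) by exact_mod_cast hφ')).2.2
  have hb1 : Differentiable ℝ b := hb.differentiable (by norm_num)
  have hb' : ContDiff ℝ 2 (deriv b) :=
    (contDiff_succ_iff_deriv.mp (show ContDiff ℝ ((2:ℕ∞)+1) b by exact_mod_cast hb)).2.2
  have haff : ContDiff ℝ 3 (fun σ : ℝ => x + σ * u) :=
    contDiff_const.add (contDiff_id.mul contDiff_const)
  have hiD : ∀ σ : ℝ, HasDerivAt (fun σ : ℝ => x + σ * u) u σ := fun σ => by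
    simpa using ((hasDerivAt_id σ).mul_const u).const_add x
  set A : ℝ → ℝ := fun σ => deriv φ (x + σ * u) with hA
  have hq : ContDiff ℝ 2 A := hφ'.comp (haff.of_le (by norm_num))
  have hqD : ∀ σ, HasDerivAt A (deriv (deriv φ) (x + σ * u) * u) σ := fun σ =>
    ((hφ'.differentiable (by norm_num) _).hasDerivAt).comp σ (hiD σ)
  have hq0 : deriv A 0 = deriv (deriv φ) x * u := by
    have := (hqD 0).deriv
    simpa using this
  set B : ℝ := deriv φ x with hB
  -- Part I : trapezoid-type term
  have hT : (fun σ : ℝ => φ (x + σ * u) - φ x - σ * u * (B + A σ) / 2)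
      =O[nhds (0:ℝ)] fun σ => σ ^ 3 := by
    have hTD : ∀ σ : ℝ, HasDerivAt (fun σ : ℝ => φ (x + σ * u) - φ x - σ * u * (B + A σ) / 2)
        (u/2 * (A σ - B - σ * u * deriv (deriv φ) (x + σ * u))) σ := by
      intro σ
      have hφD : HasDerivAt (fun σ : ℝ => φ (x + σ * u)) (deriv φ (x + σ * u) * u) σ :=
        ((hφ1 _).hasDerivAt).comp σ (hiD σ)
      have hmul : HasDerivAt (fun σ : ℝ => σ * u) u σ := by
        simpa using (hasDerivAt_id σ).mul_const u
      have hadd : HasDerivAt (fun σ => B + A σ) (deriv (deriv φ) (x + σ * u) * u) σ :=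
        (hqD σ).const_add B
      have h3 := ((hmul.mul hadd).div_const 2)
      have h4 := (hφD.sub_const (φ x)).sub h3
      refine h4.congr_deriv ?_
      simp only [hA]
      ring
    apply aux_isBigO_pow_succ_of_deriv _ 2
    · simp
    · intro σ; exact (hTD σ).differentiableAt
    · have hderivT : (deriv fun σ : ℝ => φ (x + σ * u) - φ x - σ * u * (B + A σ) / 2)
          = fun σ => u/2 * (A σ - B - σ * u * deriv (deriv φ) (x + σ * u)) :=
        funext fun σ => (hTD σ).deriv
      rw [hderivT]
      have e1 : (fun σ : ℝ => A σ - B - σ * (deriv (deriv φ) x * u))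
          =O[nhds (0:ℝ)] fun σ => σ ^ 2 := by
        have h := aux_taylor1 A hq
        rw [hq0] at h
        refine h.congr_left fun σ => ?_
        simp only [hA, hB]
        norm_num
      have e2 : (fun σ : ℝ => deriv (deriv φ) (x + σ * u) - deriv (deriv φ) x)
          =O[nhds (0:ℝ)] fun σ => σ ^ 1 := by
        have h := aux_sub_isBigO (fun σ : ℝ => deriv (deriv φ) (x + σ * u))
          (hφ''.comp (haff.of_le (by norm_num)))
        refine h.congr_left fun σ => ?_
        norm_num
      have hσu : (fun σ : ℝ => σ * u) =O[nhds (0:ℝ)] fun σ => σ :=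
        IsBigO.of_bound |u| (by
          filter_upwards with σ
          rw [Real.norm_eq_abs, Real.norm_eq_abs, abs_mul, mul_comm])
      have e3 : (fun σ : ℝ => σ * u * (deriv (deriv φ) (x + σ * u) - deriv (deriv φ) x))
          =O[nhds (0:ℝ)] fun σ => σ ^ 2 := by
        have := hσu.mul e2
        refine this.trans (IsBigO.of_bound 1 ?_)
        filter_upwards with σ
        rw [one_mul]
        apply le_of_eq
        congr 1
        ring
      have e4 := e1.sub e3
      refine ((e4.const_mul_left (u/2)).congr_left fun σ => ?_)
      ring
  -- Part II : even-part difference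
  set d : ℝ → ℝ := fun s => b s + b (-s) - 2 * b 0 with hd
  have hdD : ∀ s, HasDerivAt d (deriv b s - deriv b (-s)) s := by
    intro s
    have h1 : HasDerivAt (fun s : ℝ => b (-s)) (deriv b (-s) * (-1)) s :=
      ((hb1 (-s)).hasDerivAt).comp s (hasDerivAt_neg s)
    have h2 := (((hb1 s).hasDerivAt).add h1).sub_const (2 * b 0)
    refine h2.congr_deriv ?_
    ring
  have hderiv_d : deriv d = fun s => deriv b s - deriv b (-s) :=
    funext fun s => (hdD s).deriv
  have hd'0 : deriv d 0 = 0 := by rw [hderiv_d]; simp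
  have hd'C : ContDiff ℝ 1 (deriv d) := by
    rw [hderiv_d]
    exact (hb'.of_le one_le_two).sub ((hb'.of_le one_le_two).comp (contDiff_id.neg))
  have hd'O : deriv d =O[nhds (0:ℝ)] fun s => s ^ 1 := by
    have h := aux_sub_isBigO (deriv d) hd'C
    rw [hd'0] at h
    simpa using h
  rw [isBigO_iff] at hd'O
  obtain ⟨C, hC⟩ := hd'O
  obtain ⟨δ, hδpos, hCball⟩ := Metric.eventually_nhds_iff_ball.mp hC
  have hABO : (fun σ : ℝ => A σ - B) =O[nhds (0:ℝ)] fun σ => σ ^ 1 := by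
    have h := aux_sub_isBigO A (hq.of_le one_le_two)
    refine h.congr_left fun σ => ?_
    simp only [hA, hB]
    norm_num
  rw [isBigO_iff] at hABO
  obtain ⟨K, hK⟩ := hABO
  have hAev : ∀ᶠ σ : ℝ in nhds 0, |A σ| ≤ |B| + 1 := by
    have hc : ContinuousAt A 0 := (hq.continuous).continuousAt
    have h0 : A 0 = B := by simp [hA, hB]
    have ht : Tendsto (fun σ => |A σ|) (nhds 0) (nhds |B|) := by
      rw [← h0]
      exact (continuous_abs.continuousAt.comp hc)
    exact ht.eventually_le_const (lt_add_one |B|)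
  set M : ℝ := (|B| + 1) * |u| with hM
  have hMnn : 0 ≤ M := by positivity
  have hEδ : ∀ᶠ σ : ℝ in nhds 0, M * |σ| < δ := by
    have ht : Tendsto (fun σ : ℝ => M * |σ|) (nhds 0) (nhds 0) := by
      have h0 : Tendsto (fun σ : ℝ => M * |σ|) (nhds 0) (nhds (M * |(0:ℝ)|)) :=
        Continuous.tendsto (continuous_const.mul continuous_abs) 0
      simpa using h0
    exact ht.eventually_lt_const hδpos
  have hd2 : (fun σ : ℝ => d (A σ * (σ * u)) - d (B * (σ * u)))
      =O[nhds (0:ℝ)] fun σ => σ ^ 3 := by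
    rw [isBigO_iff]
    refine ⟨(max C 0 * M) * (max K 0 * |u|), ?_⟩
    filter_upwards [hAev, hK, hEδ] with σ h1 h2 h3
    have habs_y : |A σ * (σ * u)| ≤ M * |σ| := by
      rw [abs_mul, abs_mul]
      calc |A σ| * (|σ| * |u|) ≤ (|B| + 1) * (|σ| * |u|) := by
            apply mul_le_mul_of_nonneg_right h1 (by positivity)
        _ = M * |σ| := by rw [hM]; ring
    have habs_z : |B * (σ * u)| ≤ M * |σ| := by
      rw [abs_mul, abs_mul]
      calc |B| * (|σ| * |u|) ≤ (|B| + 1) * (|σ| * |u|) := by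
            apply mul_le_mul_of_nonneg_right (by linarith [abs_nonneg B]) (by positivity)
        _ = M * |σ| := by rw [hM]; ring
    have hmem_y : A σ * (σ * u) ∈ Metric.closedBall (0:ℝ) (M * |σ|) := by
      rw [Metric.mem_closedBall, Real.dist_eq, sub_zero]; exact habs_y
    have hmem_z : B * (σ * u) ∈ Metric.closedBall (0:ℝ) (M * |σ|) := by
      rw [Metric.mem_closedBall, Real.dist_eq, sub_zero]; exact habs_z
    have bound : ∀ t ∈ Metric.closedBall (0:ℝ) (M * |σ|),
        ‖deriv d t‖ ≤ max C 0 * (M * |σ|) := by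
      intro t ht
      simp only [Metric.mem_closedBall, Real.dist_eq, sub_zero] at ht
      have htδ : t ∈ Metric.ball (0:ℝ) δ := by
        simp only [Metric.mem_ball, Real.dist_eq, sub_zero]
        linarith
      have := hCball t htδ
      rw [pow_one, Real.norm_eq_abs (t), Real.norm_eq_abs] at this
      calc ‖deriv d t‖ ≤ C * |t| := by rwa [Real.norm_eq_abs]
        _ ≤ max C 0 * |t| := mul_le_mul_of_nonneg_right (le_max_left _ _) (abs_nonneg t)
        _ ≤ max C 0 * (M * |σ|) := mul_le_mul_of_nonneg_left ht (le_max_right _ _)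
    have key := (convex_closedBall (0:ℝ) (M * |σ|)).norm_image_sub_le_of_norm_deriv_le
      (fun t _ => (hdD t).differentiableAt) bound hmem_z hmem_y
    have hyz : ‖A σ * (σ * u) - B * (σ * u)‖ ≤ (max K 0 * |σ|) * (|σ| * |u|) := by
      rw [show A σ * (σ * u) - B * (σ * u) = (A σ - B) * (σ * u) by ring,
        Real.norm_eq_abs, abs_mul, abs_mul]
      have h2' : |A σ - B| ≤ max K 0 * |σ| := by
        rw [Real.norm_eq_abs, pow_one, Real.norm_eq_abs] at h2
        calc |A σ - B| ≤ K * |σ| := h2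
          _ ≤ max K 0 * |σ| := mul_le_mul_of_nonneg_right (le_max_left _ _) (abs_nonneg σ)
      exact mul_le_mul h2' le_rfl (by positivity) (by positivity)
    calc ‖d (A σ * (σ * u)) - d (B * (σ * u))‖
        ≤ max C 0 * (M * |σ|) * ‖A σ * (σ * u) - B * (σ * u)‖ := key
      _ ≤ max C 0 * (M * |σ|) * ((max K 0 * |σ|) * (|σ| * |u|)) := by
          apply mul_le_mul_of_nonneg_left hyz (by positivity)
      _ = (max C 0 * M) * (max K 0 * |u|) * |σ| ^ 3 := by ring
      _ = (max C 0 * M) * (max K 0 * |u|) * ‖σ ^ 3‖ := by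
          rw [Real.norm_eq_abs, abs_pow]
  -- combine
  have hFeq : ∀ σ : ℝ, φ (x + σ * u) - φ x + b (-(deriv φ (x + σ * u)) * σ * u)
      - b (deriv φ x * σ * u)
      = (φ (x + σ * u) - φ x - σ * u * (B + A σ) / 2)
        + (1/2) * (d (A σ * (σ * u)) - d (B * (σ * u))) := by
    intro σ
    have e1 := hbal' (deriv φ (x + σ * u) * (σ * u))
    have e2 := hbal' (deriv φ x * (σ * u))
    simp only [hd, hA, hB]
    ring_nf
    ring_nf at e1 e2
    linarith
  have := hT.add (hd2.const_mul_left (1/2))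
  exact this.congr_left fun σ => (hFeq σ).symm

theorem third_order_acceptance_expansion
    (g : ℝ → ℝ) (hg_pos : ∀ t > (0:ℝ), 0 < g t)
    (hg_smooth : ContDiffOn ℝ 3 g (Set.Ioi 0))
    (hbal : ∀ t > (0:ℝ), g t = t * g (1 / t))
    (φ : ℝ → ℝ) (hφ : ContDiff ℝ 3 φ) :
    deriv (fun s => Real.log (g (Real.exp s))) 0 = 1 / 2 ∧
    (∀ x u : ℝ,
      (1 - 2 * deriv (fun s => Real.log (g (Real.exp s))) 0) * deriv φ x * u = 0 ∧
      (1 - 2 * deriv (fun s => Real.log (g (Real.exp s))) 0)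
          * deriv (deriv φ) x * u ^ 2 / 2 = 0) ∧
    ∀ x u : ℝ,
      (fun σ : ℝ =>
          φ (x + σ * u) - φ x
            + Real.log (g (Real.exp (-(deriv φ (x + σ * u)) * σ * u)))
            - Real.log (g (Real.exp (deriv φ x * σ * u))))
        =O[nhds (0:ℝ)] fun σ => σ ^ 3 := by
  have hb3 := aux_b_contDiff g hg_pos hg_smooth
  have hbal' := aux_b_bal g hg_pos hbal
  have hb0 : deriv (fun s => Real.log (g (Real.exp s))) 0 = 1 / 2 :=
    aux_b_deriv_zero _ hb3 hbal'
  refine ⟨hb0, fun x u => ⟨by rw [hb0]; ring, by rw [hb0]; ring⟩, fun x u => ?_⟩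
  exact aux_main _ hb3 hbal' φ hφ x u
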